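/- Let f_τ be the 2π-periodization of F_τ, i.e. f_τ(φ) = Σ_{j∈ℤ} F_τ(φ + 2jπ). Then the k-th Fourier coefficient (f̂_τ)_k = ∫_0^{2π} f_τ(t)e^{-ikt} dt equals 0 when k is even, and equals (2√(2π)/τ)·exp(-k²/(2τ²)) when k is odd. -/

import Mathlib

open Real Complex MeasureTheory

/-- `F_τ(φ) = exp(-τ²φ²/2) - exp(-τ²(φ-π)²/2)` as a complex-valued function. -/
noncomputable def Fgauss (τ : ℝ) (φ : ℝ) : ℂ :=
  Complex.exp (-(τ^2 * φ^2 / 2)) - Complex.exp (-(τ^2 * (φ - Real.pi)^2 / 2))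

/-- The 2π-periodization of `F_τ`. -/
noncomputable def fper (τ : ℝ) (φ : ℝ) : ℂ :=
  ∑' j : ℤ, Fgauss τ (φ + 2 * j * Real.pi)

lemma continuous_Fgauss (τ : ℝ) : Continuous (Fgauss τ) := by
  unfold Fgauss; fun_prop

lemma norm_cexp_real (r : ℝ) : ‖Complex.exp (r:ℂ)‖ = Real.exp r := by
  rw [Complex.norm_exp, Complex.ofReal_re]

lemma norm_Fgauss_le (τ φ : ℝ) :
    ‖Fgauss τ φ‖ ≤ Real.exp (-(τ^2 * φ^2 / 2)) + Real.exp (-(τ^2 * (φ - Real.pi)^2 / 2)) := by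
  refine (norm_sub_le _ _).trans ?_
  rw [show (-((τ:ℂ)^2 * (φ:ℂ)^2 / 2)) = ((-(τ^2 * φ^2 / 2) : ℝ) : ℂ) by push_cast; ring,
    show (-((τ:ℂ)^2 * ((φ:ℂ) - (π:ℝ))^2 / 2)) = ((-(τ^2 * (φ - π)^2 / 2) : ℝ) : ℂ) by
      push_cast; ring, norm_cexp_real, norm_cexp_real]

lemma integrable_gauss_c (τ : ℝ) (hτ : 1 ≤ τ) :
    Integrable (fun x : ℝ => Complex.exp (-((τ:ℂ)^2 * (x:ℂ)^2 / 2))) := by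
  have h : (0:ℝ) < (((τ:ℂ)^2)/2).re := by
    rw [show ((τ:ℂ)^2/2) = ((τ^2/2 : ℝ):ℂ) by push_cast; ring, Complex.ofReal_re]
    nlinarith
  have h2 : (fun x : ℝ => Complex.exp (-((τ:ℂ)^2/2) * (x:ℂ)^2))
      = fun x : ℝ => Complex.exp (-((τ:ℂ)^2 * (x:ℂ)^2 / 2)) := by
    funext x; ring_nf
  rw [← h2]
  exact integrable_cexp_neg_mul_sq h

lemma integrable_Fgauss (τ : ℝ) (hτ : 1 ≤ τ) : Integrable (Fgauss τ) := by
  unfold Fgauss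
  refine (integrable_gauss_c τ hτ).sub ?_
  have := (integrable_gauss_c τ hτ).comp_sub_right (π : ℝ)
  refine this.congr (ae_of_all _ fun x => ?_)
  push_cast
  ring_nf

lemma sq_half_ge (j : ℤ) (t : ℝ) (ht : t ∈ Set.Icc 0 (2*π)) (c : ℝ) (hc0 : 0 ≤ c)
    (hc1 : c ≤ π) : (|(j:ℝ)| - 1) ≤ (t - c + 2*j*π)^2 / 2 := by
  obtain ⟨ht0, ht2⟩ := ht
  have hπ : (3:ℝ) < π := Real.pi_gt_three
  rcases le_or_gt (|j|) 1 with hj | hj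
  · have h1 : |(j:ℝ)| ≤ 1 := by exact_mod_cast hj
    nlinarith [sq_nonneg (t - c + 2*j*π)]
  · have hj2 : (2:ℝ) ≤ |(j:ℝ)| := by exact_mod_cast hj
    have habs : 2*π*|(j:ℝ)| - 2*π ≤ |t - c + 2*j*π| := by
      have h1 : |2*(j:ℝ)*π| ≤ |t - c + 2*j*π| + |t - c| := by
        calc |2*(j:ℝ)*π| = |(t - c + 2*j*π) - (t - c)| := by ring_nf
          _ ≤ _ := abs_sub _ _
      have h2 : |t - c| ≤ 2*π := by
        rw [abs_le]; constructor <;> linarith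
      have h3 : |2*(j:ℝ)*π| = 2*π*|(j:ℝ)| := by
        rw [abs_mul, abs_mul, _root_.abs_of_nonneg Real.pi_pos.le, _root_.abs_of_nonneg (by norm_num : (0:ℝ) ≤ 2)]
        ring
      linarith [h3 ▸ h1]
    have hnn : 0 ≤ 2*π*|(j:ℝ)| - 2*π := by nlinarith
    have hsq : (2*π*|(j:ℝ)| - 2*π)^2 ≤ (t - c + 2*j*π)^2 := by
      calc (2*π*|(j:ℝ)| - 2*π)^2 ≤ |t - c + 2*j*π|^2 := by
            apply pow_le_pow_left₀ hnn habs
        _ = (t - c + 2*j*π)^2 := sq_abs _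
    have ha : 1 ≤ |(j:ℝ)| - 1 := by linarith
    have hnn2 := mul_nonneg (by nlinarith [hπ] : (0:ℝ) ≤ 4*π^2-36) (sq_nonneg (|(j:ℝ)|-1))
    have h1 : 36*((|(j:ℝ)|-1)^2) ≤ (2*π*|(j:ℝ)|-2*π)^2 := by nlinarith [hnn2]
    have h2 : (|(j:ℝ)|-1) ≤ (|(j:ℝ)|-1)^2 := by nlinarith [ha]
    linarith [h1, h2, hsq]

lemma norm_cexp_unit (k : ℤ) (t : ℝ) : ‖Complex.exp (-Complex.I * k * t)‖ = 1 := by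
  rw [Complex.norm_exp]
  simp

lemma key_bound (τ : ℝ) (hτ : 1 ≤ τ) (k j : ℤ) (t : ℝ) (ht : t ∈ Set.Icc 0 (2*π)) :
    ‖Fgauss τ (t + 2*j*π) * Complex.exp (-Complex.I * k * t)‖
      ≤ 2 * Real.exp 1 * Real.exp (-|(j:ℝ)|) := by
  rw [norm_mul, norm_cexp_unit, mul_one]
  refine (norm_Fgauss_le _ _).trans ?_
  have hτ2 : 1 ≤ τ^2 := by nlinarith
  have key : ∀ c : ℝ, 0 ≤ c → c ≤ π →
      Real.exp (-(τ^2 * (t + 2*j*π - c)^2 / 2)) ≤ Real.exp 1 * Real.exp (-|(j:ℝ)|) := by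
    intro c hc0 hc1
    rw [← Real.exp_add]
    apply Real.exp_le_exp.2
    have hb := sq_half_ge j t ht c hc0 hc1
    have hx : (t - c + 2*j*π) = (t + 2*j*π - c) := by ring
    rw [hx] at hb
    nlinarith [sq_nonneg (t + 2*j*π - c), hb]
  have e1 := key 0 le_rfl Real.pi_pos.le
  have e2 := key π Real.pi_pos.le le_rfl
  rw [sub_zero] at e1
  linarith

lemma summable_bound : Summable (fun j : ℤ => 2 * Real.exp 1 * Real.exp (-|(j:ℝ)|)) := by
  apply Summable.mul_left
  have hg : Summable (fun n : ℕ => Real.exp (-1) ^ n) :=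
    summable_geometric_of_lt_one (Real.exp_pos _).le
      (Real.exp_lt_one_iff.2 (by norm_num))
  have h : ∀ n : ℕ, Real.exp (-1) ^ n = Real.exp (-|((n:ℤ):ℝ)|) := fun n => by
    rw [← Real.exp_nat_mul]
    congr 1
    push_cast
    rw [_root_.abs_of_nonneg (by positivity : (0:ℝ) ≤ (n:ℝ))]
    ring
  apply Summable.of_nat_of_neg
  · exact hg.congr h
  · refine hg.congr fun n => ?_
    rw [← Real.exp_nat_mul]
    congr 1
    push_cast
    rw [abs_neg, _root_.abs_of_nonneg (by positivity : (0:ℝ) ≤ (n:ℝ))]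
    ring

lemma hasSum_interval_T {f : ℝ → ℂ} (hfi : Integrable f) {T : ℝ} (hT : 0 < T) :
    HasSum (fun n : ℤ => ∫ x in ((n:ℝ)*T)..((n:ℝ)*T + T), f x) (∫ x, f x) := by
  have hu : (⋃ n : ℤ, Set.Ioc ((0:ℝ) + n • T) ((0:ℝ) + (n+1) • T)) = Set.univ :=
    iUnion_Ioc_add_zsmul hT 0
  have h := hasSum_integral_iUnion (μ := volume) (f := f)
    (fun n : ℤ => measurableSet_Ioc) (Set.pairwise_disjoint_Ioc_add_zsmul (0:ℝ) T)
    (by rw [hu]; exact hfi.integrableOn)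
  rw [hu, setIntegral_univ] at h
  convert h using 2 with n
  · rfl
  rw [intervalIntegral.integral_of_le (by nlinarith : ((n:ℝ)*T) ≤ (n:ℝ)*T + T)]
  congr 1 <;> simp [zsmul_eq_mul] <;> ring

lemma gauss_fourier (τ : ℝ) (hτ : 1 ≤ τ) (k : ℤ) :
    (∫ x : ℝ, Complex.exp (-((τ:ℂ)^2 * (x:ℂ)^2 / 2)) * Complex.exp (-Complex.I * k * x))
      = ((π:ℂ)/((τ:ℂ)^2/2))^((1:ℂ)/2) * Complex.exp (-((k:ℂ)^2/(2*(τ:ℂ)^2))) := by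
  have hb : (0:ℝ) < (((τ:ℂ)^2)/2).re := by
    rw [show ((τ:ℂ)^2/2) = ((τ^2/2 : ℝ):ℂ) by push_cast; ring, Complex.ofReal_re]
    nlinarith
  have h := fourierIntegral_gaussian hb (-(k:ℂ))
  have heq : ∀ x:ℝ, Complex.exp (-((τ:ℂ)^2 * (x:ℂ)^2 / 2)) * Complex.exp (-Complex.I * k * x)
      = Complex.exp (Complex.I * -(k:ℂ) * x) * Complex.exp (-((τ:ℂ)^2/2) * (x:ℂ)^2) := by
    intro x
    rw [mul_comm]
    congr 2 <;> ring
  simp only [heq]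
  rw [h]
  congr 2
  ring

lemma coeff_eq (τ : ℝ) (hτ : 1 ≤ τ) (k : ℤ) :
    (∫ t in (0:ℝ)..(2 * Real.pi), fper τ t * Complex.exp (-Complex.I * k * t))
      = (1 - (-1:ℂ)^k) *
        (((π:ℂ)/((τ:ℂ)^2/2))^((1:ℂ)/2) * Complex.exp (-((k:ℂ)^2/(2*(τ:ℂ)^2)))) := by
  have h2π : (0:ℝ) < 2*π := by positivity
  have hτ0 : (0:ℝ) < τ := lt_of_lt_of_le one_pos hτ
  have hFc : ∀ j : ℤ, Continuous fun t : ℝ =>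
      Fgauss τ (t + 2 * j * Real.pi) * Complex.exp (-Complex.I * k * t) := by
    intro j
    exact ((continuous_Fgauss τ).comp (continuous_id.add continuous_const)).mul
      (Complex.continuous_exp.comp (by fun_prop))
  let F : ℤ → C(ℝ, ℂ) := fun j =>
    ⟨fun t => Fgauss τ (t + 2 * j * Real.pi) * Complex.exp (-Complex.I * k * t), hFc j⟩
  have hsum : Summable fun j : ℤ =>
      ‖(F j).restrict (⟨Set.uIcc 0 (2*π), isCompact_uIcc⟩ : TopologicalSpace.Compacts ℝ)‖ := by
    refine Summable.of_nonneg_of_le (fun j => norm_nonneg _) (fun j => ?_) summable_bound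
    rw [ContinuousMap.norm_le _ (by positivity)]
    rintro ⟨x, hx⟩
    have hx' : x ∈ Set.Icc 0 (2*π) := by
      simpa [Set.uIcc_of_le h2π.le] using hx
    exact key_bound τ hτ k j x hx'
  have hint : Integrable (fun x : ℝ => Fgauss τ x * Complex.exp (-Complex.I * k * x)) := by
    have := (integrable_Fgauss τ hτ).bdd_mul
      ((by fun_prop : Continuous fun x : ℝ =>
        Complex.exp (-Complex.I * k * x))).aestronglyMeasurable
      (ae_of_all _ fun x => le_of_eq (norm_cexp_unit k x))
    refine this.congr (ae_of_all _ fun x => ?_)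
    ring
  have key : (∫ t in (0:ℝ)..(2*π), fper τ t * Complex.exp (-Complex.I * k * t))
      = ∫ x : ℝ, Fgauss τ x * Complex.exp (-Complex.I * k * x) := by
    have step1 : ∀ t : ℝ, fper τ t * Complex.exp (-Complex.I * k * t) = ∑' j : ℤ, F j t := by
      intro t
      rw [fper, ← tsum_mul_right]
      rfl
    rw [intervalIntegral.integral_congr (fun t _ => step1 t),
      ← intervalIntegral.tsum_intervalIntegral_eq_of_summable_norm hsum]
    have hs := hasSum_interval_T hint h2π
    rw [← hs.tsum_eq]
    congr 1
    funext j
    have hper : ∀ t : ℝ, F j t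
        = (fun x : ℝ => Fgauss τ x * Complex.exp (-Complex.I * k * x)) (t + 2 * j * Real.pi) := by
      intro t
      show Fgauss τ (t + 2 * j * Real.pi) * Complex.exp (-Complex.I * k * t)
        = Fgauss τ (t + 2 * j * Real.pi) * Complex.exp (-Complex.I * k * ((t + 2 * j * π : ℝ):ℂ))
      congr 1
      rw [show (-Complex.I * (k:ℂ) * ((t + 2 * j * π : ℝ):ℂ))
            = -Complex.I * k * t + ((-(k*j) : ℤ):ℂ) * (2*(π:ℝ)*Complex.I) by push_cast; ring,
        Complex.exp_add, Complex.exp_int_mul_two_pi_mul_I, mul_one]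
    rw [intervalIntegral.integral_congr (fun t _ => hper t),
      intervalIntegral.integral_comp_add_right
        (fun x : ℝ => Fgauss τ x * Complex.exp (-Complex.I * k * x)) (2 * (j:ℝ) * π)]
    congr 1 <;> push_cast <;> ring
  rw [key]
  -- split the integral
  have i1 : Integrable (fun x : ℝ =>
      Complex.exp (-((τ:ℂ)^2 * (x:ℂ)^2 / 2)) * Complex.exp (-Complex.I * k * x)) := by
    have := (integrable_gauss_c τ hτ).bdd_mul
      ((by fun_prop : Continuous fun x : ℝ =>
        Complex.exp (-Complex.I * k * x))).aestronglyMeasurable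
      (ae_of_all _ fun x => le_of_eq (norm_cexp_unit k x))
    refine this.congr (ae_of_all _ fun x => ?_)
    ring
  have i2 : Integrable (fun x : ℝ =>
      Complex.exp (-((τ:ℂ)^2 * ((x:ℂ) - (π:ℝ))^2 / 2)) * Complex.exp (-Complex.I * k * x)) := by
    have hg : Integrable (fun x : ℝ => Complex.exp (-((τ:ℂ)^2 * ((x:ℂ) - (π:ℝ))^2 / 2))) := by
      have := (integrable_gauss_c τ hτ).comp_sub_right (π : ℝ)
      refine this.congr (ae_of_all _ fun x => ?_)
      push_cast
      ring_nf
    have := hg.bdd_mul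
      ((by fun_prop : Continuous fun x : ℝ =>
        Complex.exp (-Complex.I * k * x))).aestronglyMeasurable
      (ae_of_all _ fun x => le_of_eq (norm_cexp_unit k x))
    refine this.congr (ae_of_all _ fun x => ?_)
    ring
  have hF : ∀ x : ℝ, Fgauss τ x * Complex.exp (-Complex.I * k * x)
      = Complex.exp (-((τ:ℂ)^2 * (x:ℂ)^2 / 2)) * Complex.exp (-Complex.I * k * x)
        - Complex.exp (-((τ:ℂ)^2 * ((x:ℂ) - (π:ℝ))^2 / 2)) * Complex.exp (-Complex.I * k * x) := by
    intro x
    rw [Fgauss]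
    ring
  simp only [hF]
  rw [integral_sub i1 i2, gauss_fourier τ hτ k]
  -- second integral
  have hshift : ∀ x : ℝ,
      Complex.exp (-((τ:ℂ)^2 * ((x:ℂ) - (π:ℝ))^2 / 2)) * Complex.exp (-Complex.I * k * x)
      = (fun y : ℝ => Complex.exp (-((τ:ℂ)^2 * (y:ℂ)^2 / 2)) * Complex.exp (-Complex.I * k * y))
          (x - π) * Complex.exp (-Complex.I * k * (π:ℝ)) := by
    intro x
    simp only
    rw [← Complex.exp_add, ← Complex.exp_add, ← Complex.exp_add]
    congr 1
    push_cast
    ring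
  simp only [hshift]
  rw [integral_mul_const, integral_sub_right_eq_self
    (fun y : ℝ => Complex.exp (-((τ:ℂ)^2 * (y:ℂ)^2 / 2)) * Complex.exp (-Complex.I * k * y)) π,
    gauss_fourier τ hτ k]
  have hexpk : Complex.exp (-Complex.I * k * (π:ℝ)) = (-1:ℂ)^k := by
    rw [show (-Complex.I * (k:ℂ) * ((π:ℝ):ℂ)) = ((-k:ℤ):ℂ) * ((π:ℝ) * Complex.I) by push_cast; ring,
      Complex.exp_int_mul, Complex.exp_pi_mul_I, zpow_neg]
    rcases Int.even_or_odd k with h | h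
    · rw [h.neg_one_zpow, inv_one]
    · rw [h.neg_one_zpow]
      norm_num
  rw [hexpk]
  ring

lemma cpow_simp (τ : ℝ) (hτ : 1 ≤ τ) :
    ((π:ℂ)/((τ:ℂ)^2/2))^((1:ℂ)/2) = ((Real.sqrt (2*π) / τ : ℝ):ℂ) := by
  have hτ0 : (0:ℝ) < τ := lt_of_lt_of_le one_pos hτ
  rw [show ((π:ℂ)/((τ:ℂ)^2/2)) = (((2*π/τ^2 : ℝ)):ℂ) by push_cast; ring,
    show ((1:ℂ)/2) = (((1/2:ℝ)):ℂ) by norm_num,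
    ← Complex.ofReal_cpow (by positivity) (1/2)]
  congr 1
  rw [← Real.sqrt_eq_rpow, Real.sqrt_div (by positivity) (τ^2), Real.sqrt_sq hτ0.le]

theorem stmt_1 (τ : ℝ) (hτ : 1 ≤ τ) (k : ℤ) :
    (Even k →
      (∫ t in (0:ℝ)..(2 * Real.pi), fper τ t * Complex.exp (-Complex.I * k * t)) = 0) ∧
    (Odd k →
      (∫ t in (0:ℝ)..(2 * Real.pi), fper τ t * Complex.exp (-Complex.I * k * t))
        = (2 * Real.sqrt (2 * Real.pi) / τ) * Complex.exp (-(k^2 / (2 * τ^2)))) := by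
  constructor
  · intro hk
    rw [coeff_eq τ hτ k, hk.neg_one_zpow]
    simp
  · intro hk
    rw [coeff_eq τ hτ k, hk.neg_one_zpow, cpow_simp τ hτ]
    push_cast
    ring
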